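/- For all integers k ≥ 0 and j ≥ 0, let g_1 = z · (x + y − k·z) · ∏_{s=−j}^{k+j} (x − s·z)(y − s·z) ∈ S, the defining polynomial of the cone over the arrangement A_1 obtained from the grid by adding the diagonal line H_1 : x+y = k·z. Then D_0(g_1) is a free S-module of rank 2 admitting a basis consisting of one derivation homogeneous of degree k+2j+1 and one derivation homogeneous of degree k+2j+2. (Equivalently, F_1 := T_{A_1}(k+2j+1) ≅ O_{ℙ²} ⊕ O_{ℙ²}(−1).) -/

import Mathlib

open MvPolynomial

noncomputable section

abbrev S := MvPolynomial (Fin 3) ℝ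

/-- The module of logarithmic derivations annihilating `f`. -/
def D0 (f : S) : Submodule S (Derivation ℝ S S) where
  carrier := {θ | θ f = 0}
  add_mem' := by
    intro a b ha hb
    simp only [Set.mem_setOf_eq] at *
    simp [ha, hb]
  zero_mem' := by simp
  smul_mem' := by
    intro c θ hθ
    simp only [Set.mem_setOf_eq] at *
    simp [hθ]

/-- A derivation is homogeneous of degree `d` if its values on the variables are
homogeneous of degree `d`. -/
def IsHomogDer (θ : Derivation ℝ S S) (d : ℕ) : Prop :=
  ∀ i : Fin 3, (θ (X i)).IsHomogeneous d


/-- Defining polynomial of the cone over the arrangement `A_1`: the grid plus the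
diagonal line `x + y = k·z`. -/
def g1Poly (j k : ℕ) : S :=
  X 2 * (X 0 + X 1 - C (k : ℝ) * X 2) *
    ∏ s ∈ Finset.Icc (-(j : ℤ)) ((k : ℤ) + j),
      ((X 0 - C (s : ℝ) * X 2) * (X 1 - C (s : ℝ) * X 2))

namespace GridAux
open Finset

set_option linter.unusedTactic false
set_option linter.unreachableTactic false
set_option linter.unusedVariables false

/-- The linear forms of the arrangement. -/
def xs (s : ℤ) : S := X 0 - C (s : ℝ) * X 2
def ys (s : ℤ) : S := X 1 - C (s : ℝ) * X 2
def Lk (k : ℕ) : S := X 0 + X 1 - C (k : ℝ) * X 2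

lemma prime_equiv {R R' : Type*} [CommRing R] [CommRing R'] (e : R ≃+* R') {p : R}
    (h : Prime (e p)) : Prime p := (MulEquiv.prime_iff e.toMulEquiv).1 h

lemma fin3_two : (2 : Fin 3) = Fin.succ 1 := rfl
lemma fin3_one : (1 : Fin 3) = Fin.succ 0 := rfl

lemma prime_xs (s : ℤ) : Prime (xs s) := by
  apply prime_equiv (finSuccEquiv ℝ 2).toRingEquiv
  have : (finSuccEquiv ℝ 2) (xs s) =
      Polynomial.X - Polynomial.C (C (s:ℝ) * X 1) := by
    simp only [xs, map_sub, map_mul, finSuccEquiv_X_zero, fin3_two, finSuccEquiv_X_succ]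
    have : (finSuccEquiv ℝ 2) (C (s:ℝ)) = Polynomial.C (C (s:ℝ)) := by
      simp [finSuccEquiv_apply]
    rw [this, ← Polynomial.C_mul]
  rw [AlgEquiv.toRingEquiv_eq_coe]
  show Prime ((finSuccEquiv ℝ 2) (xs s))
  rw [this]
  exact Polynomial.prime_X_sub_C _

lemma prime_Lk (k : ℕ) : Prime (Lk k) := by
  apply prime_equiv (finSuccEquiv ℝ 2).toRingEquiv
  have : (finSuccEquiv ℝ 2) (Lk k) =
      Polynomial.X - Polynomial.C (C (k:ℝ) * X 1 - X 0) := by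
    simp only [Lk, map_sub, map_add, map_mul, finSuccEquiv_X_zero, fin3_two, fin3_one,
      finSuccEquiv_X_succ]
    have : (finSuccEquiv ℝ 2) (C (k:ℝ)) = Polynomial.C (C (k:ℝ)) := by
      simp [finSuccEquiv_apply]
    rw [this, ← Polynomial.C_mul, ← Polynomial.C_sub, Polynomial.C_sub]
    ring
  rw [AlgEquiv.toRingEquiv_eq_coe]
  show Prime ((finSuccEquiv ℝ 2) (Lk k))
  rw [this]
  exact Polynomial.prime_X_sub_C _

lemma prime_ys (s : ℤ) : Prime (ys s) := by
  apply prime_equiv (renameEquiv ℝ (Equiv.swap (0 : Fin 3) 1)).toRingEquiv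
  have : (renameEquiv ℝ (Equiv.swap (0 : Fin 3) 1)) (ys s) = xs s := by
    have h2 : (Equiv.swap (0 : Fin 3) 1) 2 = 2 := by decide
    simp [ys, xs, renameEquiv_apply, rename_X, h2]
  rw [AlgEquiv.toRingEquiv_eq_coe]
  show Prime ((renameEquiv ℝ (Equiv.swap (0 : Fin 3) 1)) (ys s))
  rw [this]; exact prime_xs s

lemma prime_X0 : Prime (X 0 : S) := by
  have := prime_xs 0
  simpa [xs] using this

lemma prime_z : Prime (X 2 : S) := by
  apply prime_equiv (renameEquiv ℝ (Equiv.swap (0 : Fin 3) 2)).toRingEquiv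
  have : (renameEquiv ℝ (Equiv.swap (0 : Fin 3) 2)) (X 2) = (X 0 : S) := by
    simp [renameEquiv_apply, rename_X]
  rw [AlgEquiv.toRingEquiv_eq_coe]
  show Prime ((renameEquiv ℝ (Equiv.swap (0 : Fin 3) 2)) (X 2 : S))
  rw [this]; exact prime_X0

/-- the 3×3 determinant, rows listed -/
def det3 (a b c d e f g h i : S) : S :=
  a * (e * i - f * h) - b * (d * i - f * g) + c * (d * h - e * g)

lemma dvd_det3_r1 {l n2 n3 a b c d e f g h i : S}
    (h1 : l ∣ a + n2 * d + n3 * g) (h2 : l ∣ b + n2 * e + n3 * h)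
    (h3 : l ∣ c + n2 * f + n3 * i) : l ∣ det3 a b c d e f g h i := by
  obtain ⟨r1, hr1⟩ := h1
  obtain ⟨r2, hr2⟩ := h2
  obtain ⟨r3, hr3⟩ := h3
  refine ⟨r1 * (e * i - f * h) - r2 * (d * i - f * g) + r3 * (d * h - e * g), ?_⟩
  rw [det3]
  linear_combination (e * i - f * h) * hr1 - (d * i - f * g) * hr2 + (d * h - e * g) * hr3

lemma dvd_det3_r2 {l n3 a b c d e f g h i : S}
    (h1 : l ∣ d + n3 * g) (h2 : l ∣ e + n3 * h) (h3 : l ∣ f + n3 * i) :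
    l ∣ det3 a b c d e f g h i := by
  have key : l ∣ det3 d e f a b c g h i :=
    dvd_det3_r1 (n2 := 0) (n3 := n3) (by rw [zero_mul, add_zero]; exact h1)
      (by rw [zero_mul, add_zero]; exact h2) (by rw [zero_mul, add_zero]; exact h3)
  have : det3 a b c d e f g h i = -det3 d e f a b c g h i := by rw [det3, det3]; ring
  rw [this]
  exact key.neg_right

lemma dvd_det3_r3 {l a b c d e f g h i : S}
    (h1 : l ∣ g) (h2 : l ∣ h) (h3 : l ∣ i) :
    l ∣ det3 a b c d e f g h i := by
  have key : l ∣ det3 g h i a b c d e f :=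
    dvd_det3_r1 (n2 := 0) (n3 := 0) (by simpa using h1) (by simpa using h2) (by simpa using h3)
  have : det3 a b c d e f g h i = det3 g h i a b c d e f := by rw [det3, det3]; ring
  rw [this]
  exact key

lemma prod_primes_dvd {ι : Type*} [DecidableEq ι] (t : Finset ι) (l : ι → S) (d : S)
    (h1 : ∀ i ∈ t, Prime (l i)) (h2 : ∀ i ∈ t, l i ∣ d)
    (h3 : ∀ i ∈ t, ∀ i' ∈ t, i ≠ i' → ¬ l i ∣ l i') : (∏ i ∈ t, l i) ∣ d := by
  induction t using Finset.induction_on with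
  | empty => simp
  | insert a s ha ih =>
    rw [Finset.prod_insert ha]
    obtain ⟨e, he⟩ := ih (fun i hi => h1 i (Finset.mem_insert_of_mem hi))
      (fun i hi => h2 i (Finset.mem_insert_of_mem hi))
      (fun i hi i' hi' hne => h3 i (Finset.mem_insert_of_mem hi) i' (Finset.mem_insert_of_mem hi') hne)
    have hpa := h1 a (Finset.mem_insert_self a s)
    have hnd : ¬ l a ∣ ∏ i ∈ s, l i := by
      intro hd
      obtain ⟨i, hi, hdi⟩ := (Prime.dvd_finset_prod_iff hpa _).1 hd
      exact h3 a (Finset.mem_insert_self a s) i (Finset.mem_insert_of_mem hi)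
        (by rintro rfl; exact ha hi) hdi
    have had : l a ∣ d := h2 a (Finset.mem_insert_self a s)
    rw [he] at had ⊢
    obtain ⟨w, hw⟩ := (hpa.dvd_mul.1 had).resolve_left hnd
    exact ⟨w, by rw [hw]; ring⟩

lemma der_C (θ : Derivation ℝ S S) (r : ℝ) : θ (C r) = 0 := by
  have : (C r : S) = algebraMap ℝ S r := rfl
  rw [this, Derivation.map_algebraMap]

lemma der_C_mul (θ : Derivation ℝ S S) (r : ℝ) (p : S) : θ (C r * p) = C r * θ p := by
  rw [Derivation.leibniz, der_C]
  simp [smul_eq_mul]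

/-- Leibniz rule for finite products. -/
lemma der_prod {ι : Type*} [DecidableEq ι] (θ : Derivation ℝ S S) (t : Finset ι) (g : ι → S) :
    θ (∏ i ∈ t, g i) = ∑ i ∈ t, θ (g i) * ∏ i' ∈ t.erase i, g i' := by
  induction t using Finset.induction_on with
  | empty => simp
  | insert a s ha ih =>
    rw [Finset.prod_insert ha, Derivation.leibniz, ih, smul_eq_mul, smul_eq_mul,
      Finset.sum_insert ha, Finset.erase_insert ha, Finset.mul_sum]
    have key : ∀ i ∈ s, θ (g i) * ∏ i' ∈ (insert a s).erase i, g i'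
        = g a * (θ (g i) * ∏ i' ∈ s.erase i, g i') := by
      intro i hi
      rw [Finset.erase_insert_of_ne (ne_of_mem_of_not_mem hi ha).symm,
        Finset.prod_insert (fun h => ha (Finset.mem_of_mem_erase h))]
      ring
    rw [Finset.sum_congr rfl key]
    ring



/-- quotient of homogeneous by homogeneous is homogeneous -/
lemma isHomog_of_mul {f q : S} {m e : ℕ} (hf : f.IsHomogeneous m) (hf0 : f ≠ 0)
    (h : (f * q).IsHomogeneous (m + e)) : q.IsHomogeneous e := by
  have hcomp : ∀ i : ℕ, i ≠ e → homogeneousComponent i q = 0 := by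
    intro i hie
    have hmem : ∀ i' : ℕ, (f * homogeneousComponent i' q) ∈ homogeneousSubmodule (Fin 3) ℝ (m + i') := by
      intro i'
      exact (mem_homogeneousSubmodule _ _).2 (hf.mul (homogeneousComponent_isHomogeneous i' q))
    have hq := sum_homogeneousComponent q
    have hfq : f * q = ∑ i' ∈ Finset.range (q.totalDegree + 1), f * homogeneousComponent i' q := by
      conv_lhs => rw [← hq]
      rw [Finset.mul_sum]
    have h1 : homogeneousComponent (m + i) (f * q) = 0 := by
      apply IsHomogeneous.coeff_eq_zero at h
      ext d
      rw [coeff_homogeneousComponent]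
      split_ifs with hd
      · rcases eq_or_ne ((f*q).coeff d) 0 with h0 | h0
        · simpa using h0
        · exfalso
          have := h (d := d) (by omega : d.degree ≠ m + e)
          exact h0 this
      · simp
    have h2 : homogeneousComponent (m + i) (f * q)
        = ∑ i' ∈ Finset.range (q.totalDegree + 1),
            homogeneousComponent (m + i) (f * homogeneousComponent i' q) := by
      rw [hfq, map_sum]
    have h3 : ∀ i' ∈ Finset.range (q.totalDegree + 1), i' ≠ i →
        homogeneousComponent (m + i) (f * homogeneousComponent i' q) = 0 := by
      intro i' _ hi'
      rw [homogeneousComponent_of_mem (hmem i')]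
      simp [show ¬ (m + i = m + i') by omega, Ne.symm hi']
    by_cases hir : i ∈ Finset.range (q.totalDegree + 1)
    · have h4 := Finset.sum_eq_single_of_mem i hir h3
      rw [h4, homogeneousComponent_of_mem (hmem i), if_pos rfl] at h2
      rw [h1] at h2
      have := mul_eq_zero.1 h2.symm
      tauto
    · exact homogeneousComponent_eq_zero _ q (by simp at hir; omega)
  have hq : q = homogeneousComponent e q := by
    conv_lhs => rw [← sum_homogeneousComponent q]
    apply Finset.sum_eq_single e (fun i _ hie => hcomp i hie)
    intro he
    exact homogeneousComponent_eq_zero _ q (by simp at he; omega)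
  rw [hq]
  exact homogeneousComponent_isHomogeneous e q



variable (k j : ℕ)

def Ic : Finset ℤ := Finset.Icc (-(j : ℤ)) ((k : ℤ) + j)

lemma card_Ic : (Ic k j).card = k + 2 * j + 1 := by
  simp only [Ic, Int.card_Icc]; omega

def P : S := ∏ s ∈ Ic k j, xs s
def Py : S := ∏ s ∈ Ic k j, ys s

-- evaluation helpers
lemma eval_xs (v : Fin 3 → ℝ) (s : ℤ) : eval v (xs s) = v 0 - s * v 2 := by simp [xs]
lemma eval_ys (v : Fin 3 → ℝ) (s : ℤ) : eval v (ys s) = v 1 - s * v 2 := by simp [ys]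
lemma eval_Lk (v : Fin 3 → ℝ) : eval v (Lk k) = v 0 + v 1 - k * v 2 := by simp [Lk]

lemma not_dvd_of_eval {u w : S} (v : Fin 3 → ℝ) (hu : eval v u = 0) (hw : eval v w ≠ 0) :
    ¬ u ∣ w := by
  rintro ⟨r, rfl⟩
  exact hw (by rw [map_mul, hu, zero_mul])

-- pairwise non-divisibility of distinct forms
lemma ndvd_x_x {s t : ℤ} (h : s ≠ t) : ¬ xs s ∣ xs t := by
  apply not_dvd_of_eval (![(s:ℝ), 0, 1]) <;> simp [eval_xs]
  · exact_mod_cast sub_ne_zero.2 (fun hh => h (by exact_mod_cast hh))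
lemma ndvd_x_y (s t : ℤ) : ¬ xs s ∣ ys t := by
  apply not_dvd_of_eval (![(s:ℝ), (t:ℝ)+1, 1]) <;> simp [eval_xs, eval_ys]
lemma ndvd_x_z (s : ℤ) : ¬ xs s ∣ X 2 := by
  apply not_dvd_of_eval (![(s:ℝ), 0, 1]) <;> simp [eval_xs]
lemma ndvd_x_L (s : ℤ) : ¬ xs s ∣ Lk k := by
  apply not_dvd_of_eval (![(s:ℝ), (k:ℝ)-s+1, 1]) <;> simp [eval_xs, eval_Lk]; ring_nf; norm_num
lemma ndvd_y_y {s t : ℤ} (h : s ≠ t) : ¬ ys s ∣ ys t := by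
  apply not_dvd_of_eval (![0, (s:ℝ), 1]) <;> simp [eval_ys]
  · exact_mod_cast sub_ne_zero.2 (fun hh => h (by exact_mod_cast hh))
lemma ndvd_y_x (s t : ℤ) : ¬ ys s ∣ xs t := by
  apply not_dvd_of_eval (![(t:ℝ)+1, (s:ℝ), 1]) <;> simp [eval_xs, eval_ys]
lemma ndvd_y_z (s : ℤ) : ¬ ys s ∣ X 2 := by
  apply not_dvd_of_eval (![0, (s:ℝ), 1]) <;> simp [eval_ys]
lemma ndvd_y_L (s : ℤ) : ¬ ys s ∣ Lk k := by
  apply not_dvd_of_eval (![(k:ℝ)-s+1, (s:ℝ), 1]) <;> simp [eval_ys, eval_Lk]; ring_nf; norm_num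
lemma ndvd_z_x (s : ℤ) : ¬ (X 2 : S) ∣ xs s := by
  apply not_dvd_of_eval (![1, 1, 0]) <;> simp [eval_xs]
lemma ndvd_z_y (s : ℤ) : ¬ (X 2 : S) ∣ ys s := by
  apply not_dvd_of_eval (![1, 1, 0]) <;> simp [eval_ys]
lemma ndvd_z_L : ¬ (X 2 : S) ∣ Lk k := by
  apply not_dvd_of_eval (![1, 1, 0]) <;> simp [eval_Lk]
lemma ndvd_L_x (s : ℤ) : ¬ Lk k ∣ xs s := by
  apply not_dvd_of_eval (![(s:ℝ)+1, (k:ℝ)-s-1, 1]) <;> simp [eval_xs, eval_Lk] <;> ring_nf <;> norm_num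
lemma ndvd_L_y (s : ℤ) : ¬ Lk k ∣ ys s := by
  apply not_dvd_of_eval (![(k:ℝ)-s-1, (s:ℝ)+1, 1]) <;> simp [eval_ys, eval_Lk] <;> ring_nf <;> norm_num
lemma ndvd_L_z : ¬ Lk k ∣ X 2 := by
  apply not_dvd_of_eval (![0, (k:ℝ), 1]) <;> simp [eval_Lk]


/-- value of a derivation on linear forms -/
lemma der_xs (θ : Derivation ℝ S S) (s : ℤ) : θ (xs s) = θ (X 0) - C (s:ℝ) * θ (X 2) := by
  rw [xs, map_sub, der_C_mul]
lemma der_ys (θ : Derivation ℝ S S) (s : ℤ) : θ (ys s) = θ (X 1) - C (s:ℝ) * θ (X 2) := by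
  rw [ys, map_sub, der_C_mul]
lemma der_Lk (θ : Derivation ℝ S S) : θ (Lk k) = θ (X 0) + θ (X 1) - C (k:ℝ) * θ (X 2) := by
  rw [Lk, map_sub, map_add, der_C_mul]

/-- the substitution x ↦ k z − y -/
def psi : S →ₐ[ℝ] S := aeval ![C (k : ℝ) * X 2 - X 1, X 1, X 2]

lemma Lk_dvd_sub_psi (g : S) : Lk k ∣ g - psi k g := by
  induction g using MvPolynomial.induction_on with
  | C r => simp [psi]
  | add p q hp hq =>
    have : p + q - psi k (p + q) = (p - psi k p) + (q - psi k q) := by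
      rw [map_add]; ring
    rw [this]; exact dvd_add hp hq
  | mul_X p i hp =>
    have : p * X i - psi k (p * X i)
        = (p - psi k p) * X i + psi k p * (X i - psi k (X i)) := by
      rw [map_mul]; ring
    rw [this]
    refine dvd_add (Dvd.dvd.mul_right hp _) (Dvd.dvd.mul_left ?_ _)
    fin_cases i
    · show Lk k ∣ X 0 - psi k (X 0)
      have : psi k (X 0) = C (k : ℝ) * X 2 - X 1 := by simp [psi]
      rw [this]
      exact ⟨1, by rw [Lk]; ring⟩
    · show Lk k ∣ X 1 - psi k (X 1)
      have : psi k (X 1) = X 1 := by simp [psi]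
      simp [this]
    · show Lk k ∣ X 2 - psi k (X 2)
      have : psi k (X 2) = X 2 := by simp [psi]
      simp [this]

lemma psi_xs (s : ℤ) : psi k (xs s) = -(ys ((k : ℤ) - s)) := by
  have h1 : psi k (X 0) = C (k : ℝ) * X 2 - X 1 := by simp [psi]
  have h2 : psi k (X 2) = X 2 := by simp [psi]
  rw [xs, map_sub, map_mul, h1, h2, ys]
  have : psi k (C (s:ℝ)) = C (s:ℝ) := by simp [psi]
  rw [this]
  push_cast
  rw [map_sub]
  push_cast
  ring

lemma psi_ys (s : ℤ) : psi k (ys s) = ys s := by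
  have h1 : psi k (X 1) = X 1 := by simp [psi]
  have h2 : psi k (X 2) = X 2 := by simp [psi]
  have h3 : psi k (C (s:ℝ)) = C (s:ℝ) := by simp [psi]
  rw [ys, map_sub, map_mul, h1, h2, h3]

lemma psi_P : psi k (P k j) = C ((-1 : ℝ) ^ (k + 2*j + 1)) * Py k j := by
  rw [P, map_prod]
  have h1 : ∀ s ∈ Ic k j, psi k (xs s) = -(ys ((k:ℤ) - s)) := fun s _ => psi_xs k s
  rw [Finset.prod_congr rfl h1]
  have h2 : ∏ s ∈ Ic k j, -(ys ((k:ℤ) - s)) =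
      (-1 : S) ^ (Ic k j).card * ∏ s ∈ Ic k j, ys ((k:ℤ) - s) := by
    rw [← Finset.prod_const, ← Finset.prod_mul_distrib]
    apply Finset.prod_congr rfl
    intros; ring
  rw [h2, card_Ic]
  have h3 : ∏ s ∈ Ic k j, ys ((k:ℤ) - s) = Py k j := by
    rw [Py]
    refine Finset.prod_nbij' (fun s => (k:ℤ) - s) (fun s => (k:ℤ) - s) ?_ ?_ ?_ ?_ ?_
    · intro a ha; simp only [Ic, Finset.mem_Icc] at *; omega
    · intro a ha; simp only [Ic, Finset.mem_Icc] at *; omega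
    · intro a _; omega
    · intro a _; omega
    · intro a _; rfl
  rw [h3]
  rw [map_pow, map_neg, map_one]

lemma psi_Py : psi k (Py k j) = Py k j := by
  rw [Py, map_prod]
  exact Finset.prod_congr rfl fun s _ => psi_ys k s

def eps : ℝ := (-1 : ℝ) ^ (k + 2*j + 2)

lemma eps_sq : eps k j * eps k j = 1 := by
  rw [eps, ← pow_add]
  exact (neg_one_pow_eq_one_iff_even (by norm_num)).2 (Nat.even_iff.2 (by omega))

lemma eps_ne : eps k j ≠ 0 := by
  rw [eps]; positivity

lemma Lk_dvd_key : Lk k ∣ P k j + C (eps k j) * Py k j := by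
  have h := Lk_dvd_sub_psi k (P k j + C (eps k j) * Py k j)
  have : psi k (P k j + C (eps k j) * Py k j) = 0 := by
    rw [map_add, map_mul, psi_P, psi_Py]
    have : psi k (C (eps k j)) = C (eps k j) := by simp [psi]
    rw [this, ← add_mul, ← C_add, eps]
    have : (-1:ℝ) ^ (k + 2*j + 1) + (-1:ℝ) ^ (k + 2*j + 2) = 0 := by
      rw [pow_succ]
      ring
    rw [this, C_0, zero_mul]
  rw [this, sub_zero] at h
  exact h


-- The three derivations
def Ed : Derivation ℝ S S := mkDerivation ℝ (fun i => X i)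
def eta : Derivation ℝ S S := mkDerivation ℝ ![P k j, C (eps k j) * Py k j, 0]
def zeta : Derivation ℝ S S :=
  mkDerivation ℝ ![Lk k * P k j, -(C (eps k j) * (Lk k * Py k j)), 0]

lemma Ed_X (i : Fin 3) : Ed (X i) = X i := mkDerivation_X _ _ i
@[simp] lemma eta_X0 : eta k j (X 0) = P k j := mkDerivation_X _ _ 0
@[simp] lemma eta_X1 : eta k j (X 1) = C (eps k j) * Py k j := mkDerivation_X _ _ 1
@[simp] lemma eta_X2 : eta k j (X 2) = 0 := mkDerivation_X _ _ 2
@[simp] lemma zeta_X0 : zeta k j (X 0) = Lk k * P k j := mkDerivation_X _ _ 0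
@[simp] lemma zeta_X1 : zeta k j (X 1) = -(C (eps k j) * (Lk k * Py k j)) := mkDerivation_X _ _ 1
@[simp] lemma zeta_X2 : zeta k j (X 2) = 0 := mkDerivation_X _ _ 2

def A : S := ∑ s ∈ Ic k j, ∏ t ∈ (Ic k j).erase s, xs t
def B : S := ∑ s ∈ Ic k j, ∏ t ∈ (Ic k j).erase s, ys t
def Q : S := (Lk_dvd_key k j).choose
lemma Q_spec : P k j + C (eps k j) * Py k j = Lk k * Q k j := (Lk_dvd_key k j).choose_spec

-- values on the factors
lemma eta_xs (s : ℤ) : eta k j (xs s) = P k j := by rw [der_xs]; simp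
lemma eta_ys (s : ℤ) : eta k j (ys s) = C (eps k j) * Py k j := by rw [der_ys]; simp
lemma eta_Lk : eta k j (Lk k) = Lk k * Q k j := by
  rw [der_Lk]; simp [← Q_spec]
lemma zeta_xs (s : ℤ) : zeta k j (xs s) = Lk k * P k j := by rw [der_xs]; simp
lemma zeta_ys (s : ℤ) : zeta k j (ys s) = -(C (eps k j) * (Lk k * Py k j)) := by rw [der_ys]; simp
lemma zeta_Lk : zeta k j (Lk k) = Lk k * (P k j - C (eps k j) * Py k j) := by
  rw [der_Lk]; simp; ring
lemma Ed_xs (s : ℤ) : Ed (xs s) = xs s := by rw [der_xs, Ed_X, Ed_X, xs]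
lemma Ed_ys (s : ℤ) : Ed (ys s) = ys s := by rw [der_ys, Ed_X, Ed_X, ys]
lemma Ed_Lk : Ed (Lk k) = Lk k := by rw [der_Lk, Ed_X, Ed_X, Ed_X, Lk]

lemma eta_P : eta k j (P k j) = P k j * A k j := by
  rw [P, der_prod, A, Finset.mul_sum]
  exact Finset.sum_congr rfl fun s _ => by rw [eta_xs, P]
lemma eta_Py : eta k j (Py k j) = C (eps k j) * Py k j * B k j := by
  rw [Py, der_prod, B, Finset.mul_sum]
  exact Finset.sum_congr rfl fun s _ => by rw [eta_ys, Py]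
lemma zeta_P : zeta k j (P k j) = Lk k * P k j * A k j := by
  rw [P, der_prod, A, Finset.mul_sum]
  exact Finset.sum_congr rfl fun s _ => by rw [zeta_xs, P]
lemma zeta_Py : zeta k j (Py k j) = -(C (eps k j) * (Lk k * Py k j)) * B k j := by
  rw [Py, der_prod, B, Finset.mul_sum]
  exact Finset.sum_congr rfl fun s _ => by rw [zeta_ys, Py]
lemma Ed_P : Ed (P k j) = C (((k + 2*j + 1 : ℕ) : ℝ)) * P k j := by
  rw [P, der_prod]
  have h : ∀ s ∈ Ic k j, Ed (xs s) * ∏ t ∈ (Ic k j).erase s, xs t = ∏ t ∈ Ic k j, xs t := by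
    intro s hs; rw [Ed_xs, Finset.mul_prod_erase _ _ hs]
  rw [Finset.sum_congr rfl h, Finset.sum_const, card_Ic, nsmul_eq_mul,
    ← map_natCast (C : ℝ →+* S) (k + 2*j + 1)]

lemma Ed_Py : Ed (Py k j) = C (((k + 2*j + 1 : ℕ) : ℝ)) * Py k j := by
  rw [Py, der_prod]
  have h : ∀ s ∈ Ic k j, Ed (ys s) * ∏ t ∈ (Ic k j).erase s, ys t = ∏ t ∈ Ic k j, ys t := by
    intro s hs; rw [Ed_ys, Finset.mul_prod_erase _ _ hs]
  rw [Finset.sum_congr rfl h, Finset.sum_const, card_Ic, nsmul_eq_mul,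
    ← map_natCast (C : ℝ →+* S) (k + 2*j + 1)]

/-- the cone polynomial, in factored form -/
def Fp : S := X 2 * Lk k * (P k j * Py k j)

def mR : ℝ := 2*(k:ℝ) + 4*(j:ℝ) + 4

lemma mR_ne : mR k j ≠ 0 := by rw [mR]; positivity

lemma Ed_F : Ed (Fp k j) = C (mR k j) * Fp k j := by
  have hm : (C (mR k j) : S) = C (((k + 2*j + 1 : ℕ) : ℝ)) + C (((k + 2*j + 1 : ℕ) : ℝ)) + 1 + 1 := by
    rw [show (1 : S) = C 1 from rfl, ← map_add, ← map_add, ← map_add]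
    congr 1
    push_cast [mR]
    ring
  rw [Fp, Derivation.leibniz, Derivation.leibniz, Derivation.leibniz, Ed_P, Ed_Py, Ed_Lk,
    show Ed (X 2) = X 2 from Ed_X 2, hm]
  simp only [smul_eq_mul]
  ring

def q1 : S := Q k j + A k j + C (eps k j) * B k j
def q2 : S := P k j - C (eps k j) * Py k j + Lk k * (A k j - C (eps k j) * B k j)

lemma eta_F : eta k j (Fp k j) = q1 k j * Fp k j := by
  rw [Fp, Derivation.leibniz, Derivation.leibniz, Derivation.leibniz, eta_P, eta_Py, eta_Lk,
    eta_X2, q1]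
  simp only [smul_eq_mul]
  ring

lemma zeta_F : zeta k j (Fp k j) = q2 k j * Fp k j := by
  rw [Fp, Derivation.leibniz, Derivation.leibniz, Derivation.leibniz, zeta_P, zeta_Py, zeta_Lk,
    zeta_X2, q2]
  simp only [smul_eq_mul]
  ring

-- nonzeroness
lemma ne_of_eval {p : S} (v : Fin 3 → ℝ) (h : eval v p ≠ 0) : p ≠ 0 := by
  rintro rfl; simp at h

lemma P_ne : P k j ≠ 0 := by
  apply ne_of_eval ![1,1,0]
  rw [P, map_prod]
  have : ∀ s ∈ Ic k j, eval ![(1:ℝ),1,0] (xs s) = 1 := by intro s _; simp [xs]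
  rw [Finset.prod_congr rfl this, Finset.prod_const_one]
  norm_num

lemma Py_ne : Py k j ≠ 0 := by
  apply ne_of_eval ![1,1,0]
  rw [Py, map_prod]
  have : ∀ s ∈ Ic k j, eval ![(1:ℝ),1,0] (ys s) = 1 := by intro s _; simp [ys]
  rw [Finset.prod_congr rfl this, Finset.prod_const_one]
  norm_num

lemma Lk_ne : Lk k ≠ 0 := by
  apply ne_of_eval ![1,1,0]
  simp [Lk]

lemma X2_ne : (X 2 : S) ≠ 0 := by
  apply ne_of_eval ![1,1,1]
  simp

lemma F_ne : Fp k j ≠ 0 := by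
  apply ne_of_eval ![(k:ℝ)+j+1, (k:ℝ)+j+1, 1]
  rw [Fp, P, Py]
  simp only [map_mul, map_prod]
  have e2 : eval ![(k:ℝ)+j+1, (k:ℝ)+j+1, 1] (X 2 : S) = 1 := by simp
  have eL : eval ![(k:ℝ)+j+1, (k:ℝ)+j+1, 1] (Lk k) = (k:ℝ)+2*j+2 := by simp [Lk]; ring
  have ex : ∀ s ∈ Ic k j, eval ![(k:ℝ)+j+1, (k:ℝ)+j+1, 1] (xs s) = (k:ℝ)+j+1-s := by
    intro s _; simp [xs]
  have ey : ∀ s ∈ Ic k j, eval ![(k:ℝ)+j+1, (k:ℝ)+j+1, 1] (ys s) = (k:ℝ)+j+1-s := by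
    intro s _; simp [ys]
  rw [e2, eL, Finset.prod_congr rfl ex, Finset.prod_congr rfl ey]
  have hfac : ∀ s ∈ Ic k j, (k:ℝ)+j+1-s ≠ 0 := by
    intro s hs
    simp only [Ic, Finset.mem_Icc] at hs
    have h2 : (s:ℝ) ≤ (k:ℝ) + j := by exact_mod_cast hs.2
    intro hh; linarith
  apply mul_ne_zero (mul_ne_zero one_ne_zero (by positivity))
  exact mul_ne_zero (Finset.prod_ne_zero_iff.2 hfac) (Finset.prod_ne_zero_iff.2 hfac)

lemma hom_cast {p : S} {m n : ℕ} (h : p.IsHomogeneous m) (e : m = n) : p.IsHomogeneous n :=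
  e ▸ h

-- homogeneity
lemma hom_xs (s : ℤ) : (xs s).IsHomogeneous 1 :=
  (isHomogeneous_X _ _).sub (isHomogeneous_C_mul_X _ _)
lemma hom_ys (s : ℤ) : (ys s).IsHomogeneous 1 :=
  (isHomogeneous_X _ _).sub (isHomogeneous_C_mul_X _ _)
lemma hom_Lk : (Lk k).IsHomogeneous 1 :=
  (((isHomogeneous_X _ _).add (isHomogeneous_X _ _)).sub (isHomogeneous_C_mul_X _ _))

lemma hom_P : (P k j).IsHomogeneous (k + 2*j + 1) := by
  have := IsHomogeneous.prod (Ic k j) xs (fun _ => 1) (fun s _ => hom_xs s)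
  rwa [Finset.sum_const, smul_eq_mul, mul_one, card_Ic] at this

lemma hom_Py : (Py k j).IsHomogeneous (k + 2*j + 1) := by
  have := IsHomogeneous.prod (Ic k j) ys (fun _ => 1) (fun s _ => hom_ys s)
  rwa [Finset.sum_const, smul_eq_mul, mul_one, card_Ic] at this

lemma hom_A : (A k j).IsHomogeneous (k + 2*j) := by
  apply IsHomogeneous.sum
  intro s hs
  have := IsHomogeneous.prod ((Ic k j).erase s) xs (fun _ => 1) (fun t _ => hom_xs t)
  rwa [Finset.sum_const, smul_eq_mul, mul_one, Finset.card_erase_of_mem hs, card_Ic] at this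

lemma hom_B : (B k j).IsHomogeneous (k + 2*j) := by
  apply IsHomogeneous.sum
  intro s hs
  have := IsHomogeneous.prod ((Ic k j).erase s) ys (fun _ => 1) (fun t _ => hom_ys t)
  rwa [Finset.sum_const, smul_eq_mul, mul_one, Finset.card_erase_of_mem hs, card_Ic] at this

lemma hom_Q : (Q k j).IsHomogeneous (k + 2*j) := by
  apply isHomog_of_mul (hom_Lk k) (Lk_ne k)
  rw [← Q_spec]
  have h1 : (P k j + C (eps k j) * Py k j).IsHomogeneous (k + 2*j + 1) :=
    (hom_P k j).add ((hom_Py k j).C_mul _)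
  exact hom_cast h1 (by omega)

lemma hom_q1 : (q1 k j).IsHomogeneous (k + 2*j) :=
  ((hom_Q k j).add (hom_A k j)).add ((hom_B k j).C_mul _)

lemma hom_q2 : (q2 k j).IsHomogeneous (k + 2*j + 1) := by
  have h1 : (Lk k * (A k j - C (eps k j) * B k j)).IsHomogeneous (1 + (k + 2*j)) :=
    (hom_Lk k).mul ((hom_A k j).sub ((hom_B k j).C_mul _))
  have h2 : (Lk k * (A k j - C (eps k j) * B k j)).IsHomogeneous (k + 2*j + 1) :=
    hom_cast h1 (by omega)
  exact ((hom_P k j).sub ((hom_Py k j).C_mul _)).add h2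

-- the basis derivations
def th1 : Derivation ℝ S S := eta k j - (C (mR k j)⁻¹ * q1 k j) • Ed
def th2 : Derivation ℝ S S := zeta k j - (C (mR k j)⁻¹ * q2 k j) • Ed

lemma th1_X (i : Fin 3) : th1 k j (X i) = eta k j (X i) - C (mR k j)⁻¹ * q1 k j * X i := by
  simp [th1, Ed_X]
lemma th2_X (i : Fin 3) : th2 k j (X i) = zeta k j (X i) - C (mR k j)⁻¹ * q2 k j * X i := by
  simp [th2, Ed_X]

lemma th1_F : th1 k j (Fp k j) = 0 := by
  have : th1 k j (Fp k j) = eta k j (Fp k j) - C (mR k j)⁻¹ * q1 k j * Ed (Fp k j) := by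
    simp [th1]
  have hc : (C (mR k j)⁻¹ : S) * C (mR k j) = 1 := by
    rw [← map_mul, inv_mul_cancel₀ (mR_ne k j), map_one]
  rw [this, eta_F, Ed_F]
  linear_combination (-(q1 k j * Fp k j)) * hc

lemma th2_F : th2 k j (Fp k j) = 0 := by
  have : th2 k j (Fp k j) = zeta k j (Fp k j) - C (mR k j)⁻¹ * q2 k j * Ed (Fp k j) := by
    simp [th2]
  have hc : (C (mR k j)⁻¹ : S) * C (mR k j) = 1 := by
    rw [← map_mul, inv_mul_cancel₀ (mR_ne k j), map_one]
  rw [this, zeta_F, Ed_F]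
  linear_combination (-(q2 k j * Fp k j)) * hc

lemma hom_th1 : ∀ i : Fin 3, (th1 k j (X i)).IsHomogeneous (k + 2*j + 1) := by
  have key : ∀ i : Fin 3, (C (mR k j)⁻¹ * q1 k j * X i).IsHomogeneous (k + 2*j + 1) := by
    intro i
    rw [mul_assoc]
    exact ((hom_q1 k j).mul (isHomogeneous_X _ _)).C_mul _
  intro i
  fin_cases i
  · show ((th1 k j) (X 0)).IsHomogeneous _
    rw [th1_X, eta_X0]
    exact (hom_P k j).sub (key 0)
  · show ((th1 k j) (X 1)).IsHomogeneous _
    rw [th1_X, eta_X1]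
    exact ((hom_Py k j).C_mul _).sub (key 1)
  · show ((th1 k j) (X 2)).IsHomogeneous _
    rw [th1_X, eta_X2]
    exact (isHomogeneous_zero _ _ _).sub (key 2)

lemma hom_th2 : ∀ i : Fin 3, (th2 k j (X i)).IsHomogeneous (k + 2*j + 2) := by
  have key : ∀ i : Fin 3, (C (mR k j)⁻¹ * q2 k j * X i).IsHomogeneous (k + 2*j + 2) := by
    intro i
    rw [mul_assoc]
    exact ((hom_q2 k j).mul (isHomogeneous_X _ _)).C_mul _
  have hLP : (Lk k * P k j).IsHomogeneous (k + 2*j + 2) := by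
    exact hom_cast ((hom_Lk k).mul (hom_P k j)) (by omega)
  have hLPy : (Lk k * Py k j).IsHomogeneous (k + 2*j + 2) := by
    exact hom_cast ((hom_Lk k).mul (hom_Py k j)) (by omega)
  intro i
  fin_cases i
  · show ((th2 k j) (X 0)).IsHomogeneous _
    rw [th2_X, zeta_X0]
    exact hLP.sub (key 0)
  · show ((th2 k j) (X 1)).IsHomogeneous _
    rw [th2_X, zeta_X1]
    exact ((hLPy.C_mul _).neg).sub (key 1)
  · show ((th2 k j) (X 2)).IsHomogeneous _
    rw [th2_X, zeta_X2]
    exact (isHomogeneous_zero _ _ _).sub (key 2)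


/-- indexed family of all the linear forms -/
def lform (k : ℕ) : (ℤ × Fin 2) ⊕ Fin 2 → S :=
  Sum.elim (fun p => if p.2 = 0 then xs p.1 else ys p.1)
    (fun i => if i = 0 then X 2 else Lk k)

def formIdx : Finset ((ℤ × Fin 2) ⊕ Fin 2) :=
  Finset.disjSum ((Ic k j) ×ˢ (Finset.univ : Finset (Fin 2))) Finset.univ

lemma prod_formIdx : ∏ p ∈ formIdx k j, lform k p = Fp k j := by
  rw [formIdx, Finset.prod_disjSum]
  have h1 : ∏ x ∈ (Ic k j) ×ˢ (Finset.univ : Finset (Fin 2)), lform k (Sum.inl x)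
      = P k j * Py k j := by
    rw [Finset.prod_product]
    have : ∀ s ∈ Ic k j, ∏ i : Fin 2, lform k (Sum.inl (s, i)) = xs s * ys s := by
      intro s _
      rw [Fin.prod_univ_two]
      simp [lform]
    rw [Finset.prod_congr rfl this, Finset.prod_mul_distrib, P, Py]
  have h2 : ∏ i : Fin 2, lform k (Sum.inr i) = X 2 * Lk k := by
    rw [Fin.prod_univ_two]
    simp [lform]
  rw [h1, h2, Fp]
  ring

lemma prime_lform (p : (ℤ × Fin 2) ⊕ Fin 2) : Prime (lform k p) := by
  rcases p with ⟨s, i⟩ | i <;> fin_cases i <;>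
    simp only [lform, Sum.elim_inl, Sum.elim_inr, if_pos, if_neg, Fin.isValue] <;>
    first
      | exact prime_xs s
      | exact prime_ys s
      | exact prime_z
      | exact prime_Lk k

lemma pairwise_lform : ∀ p ∈ formIdx k j, ∀ p' ∈ formIdx k j, p ≠ p' →
    ¬ lform k p ∣ lform k p' := by
  rintro (⟨s, i⟩ | i) hp (⟨s', i'⟩ | i') hp' hne <;> fin_cases i <;> fin_cases i' <;>
    simp only [lform, Sum.elim_inl, Sum.elim_inr] <;> norm_num
  · exact ndvd_x_x (by rintro rfl; exact hne rfl)
  · exact ndvd_x_y s s'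
  · exact ndvd_y_x s s'
  · exact ndvd_y_y (by rintro rfl; exact hne rfl)
  · exact ndvd_x_z s
  · exact ndvd_x_L k s
  · exact ndvd_y_z s
  · exact ndvd_y_L k s
  · exact ndvd_z_x s'
  · exact ndvd_z_y s'
  · exact ndvd_L_x k s'
  · exact ndvd_L_y k s'
  · exact (hne rfl).elim
  · exact ndvd_z_L k
  · exact ndvd_L_z k
  · exact (hne rfl).elim

/-- main divisibility: `Fp` divides any determinant whose columns are logarithmic. -/
lemma Fp_dvd_det3 {a b c d e f g h i : S}
    (hza : X 2 ∣ g) (hzb : X 2 ∣ h) (hzc : X 2 ∣ i)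
    (hLa : Lk k ∣ a + d - C (k:ℝ) * g) (hLb : Lk k ∣ b + e - C (k:ℝ) * h)
    (hLc : Lk k ∣ c + f - C (k:ℝ) * i)
    (hxa : ∀ s ∈ Ic k j, xs s ∣ a - C (s:ℝ) * g)
    (hxb : ∀ s ∈ Ic k j, xs s ∣ b - C (s:ℝ) * h)
    (hxc : ∀ s ∈ Ic k j, xs s ∣ c - C (s:ℝ) * i)
    (hya : ∀ s ∈ Ic k j, ys s ∣ d - C (s:ℝ) * g)
    (hyb : ∀ s ∈ Ic k j, ys s ∣ e - C (s:ℝ) * h)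
    (hyc : ∀ s ∈ Ic k j, ys s ∣ f - C (s:ℝ) * i) :
    Fp k j ∣ det3 a b c d e f g h i := by
  rw [← prod_formIdx]
  apply prod_primes_dvd _ _ _ (fun p _ => prime_lform k p)
  · rintro (⟨s, ii⟩ | ii) hp <;> fin_cases ii
    · -- xs s
      have hs : s ∈ Ic k j := by
        simpa [formIdx] using hp
      show lform k (Sum.inl (s, 0)) ∣ _
      have hl : lform k (Sum.inl (s, 0)) = xs s := by simp [lform]
      rw [hl]
      apply dvd_det3_r1 (n2 := 0) (n3 := -(C (s:ℝ)))
      · have := hxa s hs; rw [show a + 0*d + -(C (s:ℝ))*g = a - C (s:ℝ)*g by ring]; exact this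
      · have := hxb s hs; rw [show b + 0*e + -(C (s:ℝ))*h = b - C (s:ℝ)*h by ring]; exact this
      · have := hxc s hs; rw [show c + 0*f + -(C (s:ℝ))*i = c - C (s:ℝ)*i by ring]; exact this
    · -- ys s
      have hs : s ∈ Ic k j := by
        simpa [formIdx] using hp
      show lform k (Sum.inl (s, 1)) ∣ _
      have hl : lform k (Sum.inl (s, 1)) = ys s := by simp [lform]
      rw [hl]
      apply dvd_det3_r2 (n3 := -(C (s:ℝ)))
      · have := hya s hs; rw [show d + -(C (s:ℝ))*g = d - C (s:ℝ)*g by ring]; exact this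
      · have := hyb s hs; rw [show e + -(C (s:ℝ))*h = e - C (s:ℝ)*h by ring]; exact this
      · have := hyc s hs; rw [show f + -(C (s:ℝ))*i = f - C (s:ℝ)*i by ring]; exact this
    · -- z
      show lform k (Sum.inr 0) ∣ _
      have hl : lform k (Sum.inr 0) = X 2 := by simp [lform]
      rw [hl]
      exact dvd_det3_r3 hza hzb hzc
    · -- Lk
      show lform k (Sum.inr 1) ∣ _
      have hl : lform k (Sum.inr 1) = Lk k := by simp [lform]
      rw [hl]
      apply dvd_det3_r1 (n2 := 1) (n3 := -(C (k:ℝ)))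
      · rw [show a + 1*d + -(C (k:ℝ))*g = a + d - C (k:ℝ)*g by ring]; exact hLa
      · rw [show b + 1*e + -(C (k:ℝ))*h = b + e - C (k:ℝ)*h by ring]; exact hLb
      · rw [show c + 1*f + -(C (k:ℝ))*i = c + f - C (k:ℝ)*i by ring]; exact hLc
  · exact pairwise_lform k j


lemma g1_eq : g1Poly j k = Fp k j := by
  rw [g1Poly, Fp, Lk, P, Py, Ic, ← Finset.prod_mul_distrib]
  rfl

/-- cofactor divisibility: each form divides its derivative for log derivations -/
lemma dvd_der {l g : S} (hp : Prime l) (hfac : Fp k j = l * g) (hnd : ¬ l ∣ g)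
    (θ : Derivation ℝ S S) (hθ : l ∣ θ (Fp k j)) : l ∣ θ l := by
  rw [hfac, Derivation.leibniz, smul_eq_mul, smul_eq_mul] at hθ
  have h1 : l ∣ g * θ l := (dvd_add_right (Dvd.intro _ rfl)).1 hθ
  rcases hp.dvd_mul.1 h1 with h | h
  · exact absurd h hnd
  · exact h

-- cofactor non-divisibility facts
lemma z_cof : ¬ (X 2 : S) ∣ Lk k * (P k j * Py k j) := by
  intro hd
  rcases (prime_z.dvd_mul).1 hd with h | h
  · exact ndvd_z_L k h
  rcases (prime_z.dvd_mul).1 h with h | h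
  · obtain ⟨s, _, hs⟩ := (prime_z.dvd_finset_prod_iff _).1 (by rw [P] at h; exact h)
    exact ndvd_z_x s hs
  · obtain ⟨s, _, hs⟩ := (prime_z.dvd_finset_prod_iff _).1 (by rw [Py] at h; exact h)
    exact ndvd_z_y s hs

lemma L_cof : ¬ Lk k ∣ X 2 * (P k j * Py k j) := by
  intro hd
  rcases ((prime_Lk k).dvd_mul).1 hd with h | h
  · exact ndvd_L_z k h
  rcases ((prime_Lk k).dvd_mul).1 h with h | h
  · obtain ⟨s, _, hs⟩ := ((prime_Lk k).dvd_finset_prod_iff _).1 (by rw [P] at h; exact h)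
    exact ndvd_L_x k s hs
  · obtain ⟨s, _, hs⟩ := ((prime_Lk k).dvd_finset_prod_iff _).1 (by rw [Py] at h; exact h)
    exact ndvd_L_y k s hs

lemma x_cof {s : ℤ} (hs : s ∈ Ic k j) :
    ¬ xs s ∣ X 2 * Lk k * ((∏ t ∈ (Ic k j).erase s, xs t) * Py k j) := by
  intro hd
  rcases ((prime_xs s).dvd_mul).1 hd with h | h
  · rcases ((prime_xs s).dvd_mul).1 h with h | h
    · exact ndvd_x_z s h
    · exact ndvd_x_L k s h
  rcases ((prime_xs s).dvd_mul).1 h with h | h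
  · obtain ⟨t, ht, hdt⟩ := ((prime_xs s).dvd_finset_prod_iff _).1 h
    exact ndvd_x_x (Finset.ne_of_mem_erase ht).symm hdt
  · obtain ⟨t, _, hdt⟩ := ((prime_xs s).dvd_finset_prod_iff _).1 (by rw [Py] at h; exact h)
    exact ndvd_x_y s t hdt

lemma y_cof {s : ℤ} (hs : s ∈ Ic k j) :
    ¬ ys s ∣ X 2 * Lk k * ((∏ t ∈ (Ic k j).erase s, ys t) * P k j) := by
  intro hd
  rcases ((prime_ys s).dvd_mul).1 hd with h | h
  · rcases ((prime_ys s).dvd_mul).1 h with h | h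
    · exact ndvd_y_z s h
    · exact ndvd_y_L k s h
  rcases ((prime_ys s).dvd_mul).1 h with h | h
  · obtain ⟨t, ht, hdt⟩ := ((prime_ys s).dvd_finset_prod_iff _).1 h
    exact ndvd_y_y (Finset.ne_of_mem_erase ht).symm hdt
  · obtain ⟨t, _, hdt⟩ := ((prime_ys s).dvd_finset_prod_iff _).1 (by rw [P] at h; exact h)
    exact ndvd_y_x s t hdt

-- divisibility facts for a derivation annihilating Fp
section delta
variable (θ : Derivation ℝ S S)

lemma delta_z (hθ : θ (Fp k j) = 0) : (X 2 : S) ∣ θ (X 2) := by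
  have h := dvd_der k j prime_z (by rw [Fp, mul_assoc]) (z_cof k j) θ (by rw [hθ]; exact dvd_zero _)
  exact h

lemma delta_L (hθ : θ (Fp k j) = 0) : Lk k ∣ θ (X 0) + θ (X 1) - C (k:ℝ) * θ (X 2) := by
  have hfac : Fp k j = Lk k * (X 2 * (P k j * Py k j)) := by rw [Fp]; ring
  have h := dvd_der k j (prime_Lk k) hfac (L_cof k j) θ (by rw [hθ]; exact dvd_zero _)
  rwa [der_Lk] at h

lemma delta_x (hθ : θ (Fp k j) = 0) {s : ℤ} (hs : s ∈ Ic k j) : xs s ∣ θ (X 0) - C (s:ℝ) * θ (X 2) := by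
  have hfac : Fp k j = xs s * (X 2 * Lk k * ((∏ t ∈ (Ic k j).erase s, xs t) * Py k j)) := by
    rw [Fp, P, ← Finset.mul_prod_erase _ _ hs]
    ring
  have h := dvd_der k j (prime_xs s) hfac (x_cof k j hs) θ (by rw [hθ]; exact dvd_zero _)
  rwa [der_xs] at h

lemma delta_y (hθ : θ (Fp k j) = 0) {s : ℤ} (hs : s ∈ Ic k j) : ys s ∣ θ (X 1) - C (s:ℝ) * θ (X 2) := by
  have hfac : Fp k j = ys s * (X 2 * Lk k * ((∏ t ∈ (Ic k j).erase s, ys t) * P k j)) := by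
    rw [Fp, Py, ← Finset.mul_prod_erase _ _ hs]
    ring
  have h := dvd_der k j (prime_ys s) hfac (y_cof k j hs) θ (by rw [hθ]; exact dvd_zero _)
  rwa [der_ys] at h
end delta

lemma mem_D0 {f : S} {θ : Derivation ℝ S S} : θ ∈ D0 f ↔ θ f = 0 := Iff.rfl

lemma C_ne_zero {r : ℝ} (h : r ≠ 0) : (C r : S) ≠ 0 := by
  intro hc
  exact h (by simpa using congrArg (fun p : S => coeff 0 p) hc)

lemma indep (p q : S) (h : p • th1 k j + q • th2 k j = 0) : p = 0 ∧ q = 0 := by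
  have happ : ∀ i : Fin 3, p * th1 k j (X i) + q * th2 k j (X i) = 0 := by
    intro i
    have := congrArg (fun θd : Derivation ℝ S S => θd (X i)) h
    simpa using this
  have h0 := happ 0
  have h1 := happ 1
  have h2 := happ 2
  rw [th1_X, th2_X, eta_X0, zeta_X0] at h0
  rw [th1_X, th2_X, eta_X1, zeta_X1] at h1
  rw [th1_X, th2_X, eta_X2, zeta_X2] at h2
  have hpq : p * q1 k j + q * q2 k j = 0 := by
    have h2' : C (mR k j)⁻¹ * X 2 * (p * q1 k j + q * q2 k j) = 0 := by
      linear_combination -h2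
    exact (mul_eq_zero.1 h2').resolve_left
      (mul_ne_zero (C_ne_zero (inv_ne_zero (mR_ne k j))) X2_ne)
  have hA : P k j * (p + q * Lk k) = 0 := by
    linear_combination h0 + (C (mR k j)⁻¹ * X 0) * hpq
  have hB : C (eps k j) * Py k j * (p - q * Lk k) = 0 := by
    linear_combination h1 + (C (mR k j)⁻¹ * X 1) * hpq
  have hs1 : p + q * Lk k = 0 := (mul_eq_zero.1 hA).resolve_left (P_ne k j)
  have hs2 : p - q * Lk k = 0 := (mul_eq_zero.1 hB).resolve_left
    (mul_ne_zero (C_ne_zero (eps_ne k j)) (Py_ne k j))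
  have h2q : (2:S) * (q * Lk k) = 0 := by linear_combination hs1 - hs2
  have h2ne : (2:S) ≠ 0 := two_ne_zero
  have hqL : q * Lk k = 0 := (mul_eq_zero.1 h2q).resolve_left h2ne
  have hq : q = 0 := (mul_eq_zero.1 hqL).resolve_right (Lk_ne k)
  refine ⟨?_, hq⟩
  rw [hq, zero_mul, add_zero] at hs1
  exact hs1


end GridAux

set_option maxHeartbeats 2000000 in
open GridAux in
/-- `A_1` is free with exponents `(k+2j+1, k+2j+2)`, i.e.
`F_1 = T_{A_1}(k+2j+1) ≃ O ⊕ O(-1)`. -/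
theorem grid_plus_one_diagonal_free (k j : ℕ) :
    ∃ θ₁ θ₂ : Derivation ℝ S S,
      θ₁ ∈ D0 (g1Poly j k) ∧ θ₂ ∈ D0 (g1Poly j k) ∧
      IsHomogDer θ₁ (k + 2 * j + 1) ∧ IsHomogDer θ₂ (k + 2 * j + 2) ∧
      (∀ δ ∈ D0 (g1Poly j k), ∃! p : S × S, p.1 • θ₁ + p.2 • θ₂ = δ) := by
  refine ⟨th1 k j, th2 k j, ?_, ?_, hom_th1 k j, hom_th2 k j, ?_⟩
  · rw [mem_D0, g1_eq]; exact th1_F k j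
  · rw [mem_D0, g1_eq]; exact th2_F k j
  intro δ hδ
  have hδ0 : δ (Fp k j) = 0 := by rw [← g1_eq]; exact mem_D0.1 hδ
  set a := δ (X 0) with ha_def
  set b := δ (X 1) with hb_def
  set c := δ (X 2) with hc_def
  have hzc : (X 2 : S) ∣ c := delta_z k j δ hδ0
  have hLd : Lk k ∣ a + b - C (k:ℝ) * c := delta_L k j δ hδ0
  have hxd : ∀ s ∈ Ic k j, xs s ∣ a - C (s:ℝ) * c := fun s hs => delta_x k j δ hδ0 hs
  have hyd : ∀ s ∈ Ic k j, ys s ∣ b - C (s:ℝ) * c := fun s hs => delta_y k j δ hδ0 hs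
  -- the three Cramer determinants are divisible by Fp
  have hd0 : Fp k j ∣ det3 a (P k j) (Lk k * P k j)
      b (C (eps k j) * Py k j) (-(C (eps k j) * (Lk k * Py k j))) c 0 0 := by
    apply Fp_dvd_det3 k j hzc (dvd_zero _) (dvd_zero _)
    · exact hLd
    · exact (by rw [mul_zero, sub_zero]; exact Lk_dvd_key k j)
    · exact (by rw [mul_zero, sub_zero]; exact ⟨P k j - C (eps k j) * Py k j, by ring⟩)
    · exact hxd
    · exact fun s hs => by rw [mul_zero, sub_zero, P]; exact Finset.dvd_prod_of_mem _ hs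
    · exact fun s hs => by
        rw [mul_zero, sub_zero, P]; exact (Finset.dvd_prod_of_mem _ hs).mul_left _
    · exact hyd
    · exact fun s hs => by
        rw [mul_zero, sub_zero, Py]; exact (Finset.dvd_prod_of_mem _ hs).mul_left _
    · exact fun s hs => by
        rw [mul_zero, sub_zero, Py]
        exact (((Finset.dvd_prod_of_mem _ hs).mul_left _).mul_left _).neg_right
  have hd1 : Fp k j ∣ det3 (X 0) a (Lk k * P k j)
      (X 1) b (-(C (eps k j) * (Lk k * Py k j))) (X 2) c 0 := by
    apply Fp_dvd_det3 k j dvd_rfl hzc (dvd_zero _)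
    · exact ⟨1, by rw [Lk]; ring⟩
    · exact hLd
    · exact (by rw [mul_zero, sub_zero]; exact ⟨P k j - C (eps k j) * Py k j, by ring⟩)
    · exact fun s _ => ⟨1, by rw [xs]; ring⟩
    · exact hxd
    · exact fun s hs => by
        rw [mul_zero, sub_zero, P]; exact (Finset.dvd_prod_of_mem _ hs).mul_left _
    · exact fun s _ => ⟨1, by rw [ys]; ring⟩
    · exact hyd
    · exact fun s hs => by
        rw [mul_zero, sub_zero, Py]
        exact (((Finset.dvd_prod_of_mem _ hs).mul_left _).mul_left _).neg_right
  have hd2 : Fp k j ∣ det3 (X 0) (P k j) a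
      (X 1) (C (eps k j) * Py k j) b (X 2) 0 c := by
    apply Fp_dvd_det3 k j dvd_rfl (dvd_zero _) hzc
    · exact ⟨1, by rw [Lk]; ring⟩
    · exact (by rw [mul_zero, sub_zero]; exact Lk_dvd_key k j)
    · exact hLd
    · exact fun s _ => ⟨1, by rw [xs]; ring⟩
    · exact fun s hs => by rw [mul_zero, sub_zero, P]; exact Finset.dvd_prod_of_mem _ hs
    · exact hxd
    · exact fun s _ => ⟨1, by rw [ys]; ring⟩
    · exact fun s hs => by
        rw [mul_zero, sub_zero, Py]; exact (Finset.dvd_prod_of_mem _ hs).mul_left _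
    · exact hyd
  obtain ⟨e0, he0⟩ := hd0
  obtain ⟨e1, he1⟩ := hd1
  obtain ⟨e2, he2⟩ := hd2
  have hu : -(2 * eps k j) ≠ 0 := neg_ne_zero.2 (mul_ne_zero two_ne_zero (eps_ne k j))
  have hdetM : det3 (X 0) (P k j) (Lk k * P k j) (X 1) (C (eps k j) * Py k j)
      (-(C (eps k j) * (Lk k * Py k j))) (X 2) 0 0 = C (-(2 * eps k j)) * Fp k j := by
    have hC : (C (-(2 * eps k j)) : S) = -(2 * C (eps k j)) := by
      rw [map_neg, map_mul, map_ofNat]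
    rw [det3, Fp, hC]; ring
  -- Cramer identities
  have cr1 : C (-(2 * eps k j)) * a = e0 * X 0 + e1 * P k j + e2 * (Lk k * P k j) := by
    apply mul_left_cancel₀ (F_ne k j)
    have expand : C (-(2 * eps k j)) * Fp k j * a =
        (Fp k j * e0) * X 0 + (Fp k j * e1) * P k j + (Fp k j * e2) * (Lk k * P k j) := by
      rw [← he0, ← he1, ← he2, ← hdetM]
      simp only [det3]; ring
    linear_combination expand
  have cr2 : C (-(2 * eps k j)) * b = e0 * X 1 + e1 * (C (eps k j) * Py k j)
      + e2 * (-(C (eps k j) * (Lk k * Py k j))) := by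
    apply mul_left_cancel₀ (F_ne k j)
    have expand : C (-(2 * eps k j)) * Fp k j * b =
        (Fp k j * e0) * X 1 + (Fp k j * e1) * (C (eps k j) * Py k j)
          + (Fp k j * e2) * (-(C (eps k j) * (Lk k * Py k j))) := by
      rw [← he0, ← he1, ← he2, ← hdetM]
      simp only [det3]; ring
    linear_combination expand
  have cr3 : C (-(2 * eps k j)) * c = e0 * X 2 := by
    apply mul_left_cancel₀ (F_ne k j)
    have expand : C (-(2 * eps k j)) * Fp k j * c = (Fp k j * e0) * X 2 := by
      rw [← he0, ← hdetM]
      simp only [det3]; ring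
    linear_combination expand
  set p0 := C ((-(2 * eps k j))⁻¹) * e0 with hp0_def
  set p1 := C ((-(2 * eps k j))⁻¹) * e1 with hp1_def
  set p2 := C ((-(2 * eps k j))⁻¹) * e2 with hp2_def
  have hCu : C ((-(2 * eps k j))⁻¹) * C (-(2 * eps k j)) = (1 : S) := by
    rw [← map_mul, inv_mul_cancel₀ hu, map_one]
  have hcomp0 : a = p0 * X 0 + p1 * P k j + p2 * (Lk k * P k j) := by
    rw [hp0_def, hp1_def, hp2_def]
    linear_combination C ((-(2 * eps k j))⁻¹) * cr1 - a * hCu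
  have hcomp1 : b = p0 * X 1 + p1 * (C (eps k j) * Py k j)
      + p2 * (-(C (eps k j) * (Lk k * Py k j))) := by
    rw [hp0_def, hp1_def, hp2_def]
    linear_combination C ((-(2 * eps k j))⁻¹) * cr2 - b * hCu
  have hcomp2 : c = p0 * X 2 := by
    rw [hp0_def]
    linear_combination C ((-(2 * eps k j))⁻¹) * cr3 - c * hCu
  -- δ as a combination of Ed, eta, zeta
  have hδ1 : δ = p0 • Ed + p1 • eta k j + p2 • zeta k j := by
    have happ : ∀ i : Fin 3, (p0 • Ed + p1 • eta k j + p2 • zeta k j) (X i)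
        = p0 * (Ed (X i)) + p1 * (eta k j (X i)) + p2 * (zeta k j (X i)) := by
      intro i; simp
    apply MvPolynomial.derivation_ext
    intro i
    fin_cases i
    · show δ (X 0) = (p0 • Ed + p1 • eta k j + p2 • zeta k j) (X 0)
      rw [happ 0, Ed_X, eta_X0, zeta_X0]
      exact hcomp0
    · show δ (X 1) = (p0 • Ed + p1 • eta k j + p2 • zeta k j) (X 1)
      rw [happ 1, Ed_X, eta_X1, zeta_X1]
      exact hcomp1
    · show δ (X 2) = (p0 • Ed + p1 • eta k j + p2 • zeta k j) (X 2)
      rw [happ 2, Ed_X, eta_X2, zeta_X2]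
      show c = p0 * X 2 + p1 * 0 + p2 * 0
      rw [hcomp2]; ring
  -- switch to the basis th1, th2
  have heta : eta k j = th1 k j + (C (mR k j)⁻¹ * q1 k j) • Ed :=
    (sub_add_cancel _ _).symm
  have hzeta : zeta k j = th2 k j + (C (mR k j)⁻¹ * q2 k j) • Ed :=
    (sub_add_cancel _ _).symm
  set w := p0 + p1 * (C (mR k j)⁻¹ * q1 k j) + p2 * (C (mR k j)⁻¹ * q2 k j) with hw_def
  have hδ2 : δ = p1 • th1 k j + p2 • th2 k j + w • Ed := by
    rw [hδ1, heta, hzeta, hw_def]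
    module
  have hw0 : w = 0 := by
    have happF := congrArg (fun θd : Derivation ℝ S S => θd (Fp k j)) hδ2
    have hkey : (0:S) = w * (C (mR k j) * Fp k j) := by
      simpa [th1_F, th2_F, Ed_F, hδ0] using happF
    exact (mul_eq_zero.1 hkey.symm).resolve_right
      (mul_ne_zero (C_ne_zero (mR_ne k j)) (F_ne k j))
  have hδ3 : p1 • th1 k j + p2 • th2 k j = δ := by
    rw [hδ2, hw0, zero_smul, add_zero]
  refine ⟨(p1, p2), hδ3, ?_⟩
  rintro ⟨y1, y2⟩ hy
  dsimp only at hy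
  have hdiff : (y1 - p1) • th1 k j + (y2 - p2) • th2 k j = 0 := by
    have hstep : (y1 - p1) • th1 k j + (y2 - p2) • th2 k j
        = (y1 • th1 k j + y2 • th2 k j) - (p1 • th1 k j + p2 • th2 k j) := by
      module
    rw [hstep, hy, hδ3, sub_self]
  obtain ⟨hy1, hy2⟩ := indep k j _ _ hdiff
  have e1' : y1 = p1 := sub_eq_zero.1 hy1
  have e2' : y2 = p2 := sub_eq_zero.1 hy2
  rw [e1', e2']
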